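/- Define f : ℝ → ℝ by f(x) = |x| for x ≥ −1 and f(x) = x + 2 for x < −1. Then there is no continuous function w : [0,1] → ℝ with w(0) = 0 such that both sup_{t∈[0,1/2]} (f(w(t)) − f(w(0))) < 1/2 and sup_{t∈[1/2,1]} (f(w(t)) − f(w(0))) < −1. Consequently, for any process B with continuous paths starting at 0, the event F_{f(B)}^1(0, 1/2, 1/2, 1) has probability zero, so the process f(B) does not satisfy condition (A). -/

import Mathlib

open MeasureTheory Set Filter

noncomputable section

/-- The function of Example 3.6 of the paper: `f(x) = |x|` for `x ≥ −1` and `f(x) = x + 2`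
for `x < −1`. -/
def fEx (x : ℝ) : ℝ := if -1 ≤ x then |x| else x + 2

/-- The events `F_X^j(τ, h, δ, c)` from the paper: for `j = 0`,
`{sup_{t∈[0,T−τ)} |X_{τ+t} − X_τ| < δ}`; for `j = 1`,
`{sup_{t∈[0,h]} (X_{τ+t} − X_τ) < δ} ∩ {sup_{t∈[h,T−τ)} (X_{τ+t} − X_τ) < −c}`; for `j = −1`,
`{inf_{t∈[0,h]} (X_{τ+t} − X_τ) > −δ} ∩ {inf_{t∈[h,T−τ)} (X_{τ+t} − X_τ) > c}`. -/
def FXev {Ω : Type*} (X : ℝ → Ω → ℝ) (T : ℝ) (τ : Ω → ℝ) (h δ c : ℝ) (j : ℤ) : Set Ω :=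
  if j = 0 then
    {ω | sSup ((fun t => |X (τ ω + t) ω - X (τ ω) ω|) '' Ico 0 (T - τ ω)) < δ}
  else if j = 1 then
    {ω | sSup ((fun t => X (τ ω + t) ω - X (τ ω) ω) '' Icc 0 h) < δ ∧
         sSup ((fun t => X (τ ω + t) ω - X (τ ω) ω) '' Ico h (T - τ ω)) < -c}
  else
    {ω | -δ < sInf ((fun t => X (τ ω + t) ω - X (τ ω) ω) '' Icc 0 h) ∧
         c < sInf ((fun t => X (τ ω + t) ω - X (τ ω) ω) '' Ico h (T - τ ω))}

/-- Condition (A) of the paper. -/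
def CondA {Ω : Type*} {m : MeasurableSpace Ω} (P : Measure Ω) (ℱ : Filtration ℝ m)
    (T : ℝ) (X : ℝ → Ω → ℝ) : Prop :=
  ∀ h ∈ Ioo (0:ℝ) T, ∀ (τ : Ω → ℝ) (hτ : IsStoppingTime ℱ (fun ω => (τ ω : WithTop ℝ))),
    (∀ ω, τ ω ∈ Ico (0:ℝ) (T - h)) →
    ∀ δ > (0:ℝ), ∀ c > (0:ℝ), ∀ j ∈ ({-1, 0, 1} : Set ℤ),
    ∀ᵐ ω ∂P, 0 < (P[(FXev X T τ h δ c j).indicator (fun _ => (1:ℝ)) |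
        hτ.measurableSpace]) ω

lemma fEx_cont : Continuous fEx := by
  unfold fEx
  apply Continuous.if_le continuous_abs (by continuity) continuous_const continuous_id
  intro x hx
  subst hx
  norm_num

lemma fEx_zero : fEx 0 = 0 := by simp [fEx]

lemma fEx_neg_one : fEx (-1) = 1 := by norm_num [fEx]

lemma key (w : ℝ → ℝ) (hw : ContinuousOn w (Icc 0 1)) (hw0 : w 0 = 0) :
    ¬ (sSup ((fun t => fEx (w t) - fEx (w 0)) '' Icc 0 (1/2)) < 1/2 ∧
       sSup ((fun t => fEx (w t) - fEx (w 0)) '' Ico (1/2) 1) < -1) := by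
  rintro ⟨h1, h2⟩
  rw [hw0, fEx_zero] at h1 h2
  simp only [sub_zero] at h1 h2
  set S2 := (fun t => fEx (w t)) '' Ico (1/2 : ℝ) 1 with hS2
  have hne2 : S2.Nonempty := ⟨fEx (w (1/2)), ⟨1/2, by constructor <;> norm_num, rfl⟩⟩
  have hbdd2 : BddAbove S2 := by
    by_contra hb
    rw [Real.sSup_of_not_bddAbove hb] at h2
    norm_num at h2
  have hmem : fEx (w (1/2)) ∈ S2 := ⟨1/2, by constructor <;> norm_num, rfl⟩
  have hlt : fEx (w (1/2)) < -1 := lt_of_le_of_lt (le_csSup hbdd2 hmem) h2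
  have hwlt : w (1/2) < -1 := by
    by_contra hge
    push_neg at hge
    have : fEx (w (1/2)) = |w (1/2)| := if_pos hge
    rw [this] at hlt
    have := abs_nonneg (w (1/2)); linarith
  have hsub : Icc (0:ℝ) (1/2) ⊆ Icc 0 1 := Icc_subset_Icc le_rfl (by norm_num)
  have hw' : ContinuousOn w (Icc 0 (1/2)) := hw.mono hsub
  have hmem1 : (-1 : ℝ) ∈ Icc (w (1/2)) (w 0) := by
    rw [hw0]; exact ⟨hwlt.le, by norm_num⟩
  obtain ⟨t, ht, hwt⟩ := intermediate_value_Icc' (by norm_num : (0:ℝ) ≤ 1/2) hw' hmem1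
  have hcomp : IsCompact ((fun t => fEx (w t)) '' Icc (0:ℝ) (1/2)) :=
    isCompact_Icc.image_of_continuousOn (fEx_cont.comp_continuousOn hw')
  have hle : fEx (w t) ≤ sSup ((fun t => fEx (w t)) '' Icc (0:ℝ) (1/2)) :=
    le_csSup hcomp.bddAbove ⟨t, ht, rfl⟩
  rw [hwt, fEx_neg_one] at hle
  linarith

/-- Remark 4.3 of the paper: there is no continuous path `w : [0,1] → ℝ` with `w(0) = 0`
such that both `sup_{t∈[0,1/2]} (f(w(t)) − f(w(0))) < 1/2` and
`sup_{t∈[1/2,1)} (f(w(t)) − f(w(0))) < −1`; consequently, for any process `B` with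
continuous paths started at `0`, the event `F_{f(B)}^1(0, 1/2, 1/2, 1)` has probability
zero, and the process `f(B)` does not satisfy condition (A) (with respect to any
filtration). -/
theorem example_fails_condA {Ω : Type*} {m : MeasurableSpace Ω} (P : Measure Ω)
    [IsProbabilityMeasure P] (B : ℝ → Ω → ℝ)
    (hBcont : ∀ ω, ContinuousOn (fun t => B t ω) (Icc 0 1))
    (hB0 : ∀ ω, B 0 ω = 0) :
    (¬ ∃ w : ℝ → ℝ, ContinuousOn w (Icc 0 1) ∧ w 0 = 0 ∧
      sSup ((fun t => fEx (w t) - fEx (w 0)) '' Icc 0 (1/2)) < 1/2 ∧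
      sSup ((fun t => fEx (w t) - fEx (w 0)) '' Ico (1/2) 1) < -1) ∧
    P (FXev (fun t ω => fEx (B t ω)) 1 (fun _ => 0) (1/2) (1/2) 1 1) = 0 ∧
    (∀ ℱ : Filtration ℝ m, ¬ CondA P ℱ 1 (fun t ω => fEx (B t ω))) := by
  have hempty : FXev (fun t ω => fEx (B t ω)) 1 (fun _ => 0) (1/2) (1/2) 1 1 = ∅ := by
    ext ω
    simp only [FXev, if_neg (by norm_num : (1:ℤ) ≠ 0), if_pos rfl, mem_setOf_eq,
      mem_empty_iff_false, iff_false, zero_add, sub_zero]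
    exact key (fun t => B t ω) (hBcont ω) (hB0 ω)
  refine ⟨?_, ?_, ?_⟩
  · rintro ⟨w, hw, hw0, hsup1, hsup2⟩
    exact key w hw hw0 ⟨hsup1, hsup2⟩
  · rw [hempty]; simp
  · intro ℱ hA
    have h0 : IsStoppingTime ℱ (fun _ : Ω => ((0:ℝ) : WithTop ℝ)) := isStoppingTime_const ℱ 0
    have hfa := hA (1/2) ⟨by norm_num, by norm_num⟩ (fun _ => 0) h0
      (fun ω => ⟨le_rfl, by norm_num⟩) (1/2) (by norm_num) 1 one_pos 1 (by simp)
    rw [hempty, show (∅ : Set Ω).indicator (fun _ => (1:ℝ)) = 0 from Set.indicator_empty _,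
      condExp_zero] at hfa
    simp only [Pi.zero_apply, lt_irrefl] at hfa
    haveI : (ae P).NeBot := ae_neBot.2 (IsProbabilityMeasure.ne_zero P)
    obtain ⟨ω, hω⟩ := hfa.exists
    exact hω

end
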